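/- Let u₁, u₂, v₁, v₂ ∈ ℂ with u₁−v₂ ∉ ℤ_{≤0} and v₁−v₂ ∉ ℤ_{≤0}. Suppose R is a ℂ-linear endomorphism of ℂ[z₁,z₂] such that R commutes with multiplication by z₁ and R (L₁(u₁,u₂) + L₂(v₁,v₂)) = (L₁(v₁,u₂) + L₂(u₁,v₂)) R as 2×2 matrices of operators. Then there exists a constant c ∈ ℂ such that R = c · D₂[u₁−v₂, v₁−v₂], where D₂[α,β](z₁ʲ(z₂−z₁)ᵏ) = (Γ(k+α)/Γ(k+β)) z₁ʲ(z₂−z₁)ᵏ; that is, the defining system fixes the operator ℛ₁ up to overall normalization. -/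

import Mathlib

set_option linter.unreachableTactic false
set_option linter.unusedTactic false
set_option maxHeartbeats 1000000


open MvPolynomial

/-- Multiplication by `zᵢ` on `ℂ[z₁,z₂]` (indices `0,1` for `1,2`). -/
noncomputable def Zm (i : Fin 2) : Module.End ℂ (MvPolynomial (Fin 2) ℂ) :=
  LinearMap.mulLeft ℂ (X i)

/-- Partial derivative `∂ᵢ = ∂/∂zᵢ` on `ℂ[z₁,z₂]`. -/
noncomputable def Dm (i : Fin 2) : Module.End ℂ (MvPolynomial (Fin 2) ℂ) :=
  (pderiv i).toLinearMap

/-- The `sl(2)` Lax matrix `Lᵢ(a,b) = [[a + zᵢ∂ᵢ, −∂ᵢ], [zᵢ²∂ᵢ + (a−b)zᵢ, b − zᵢ∂ᵢ]]`. -/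
noncomputable def Lax (i : Fin 2) (a b : ℂ) :
    Matrix (Fin 2) (Fin 2) (Module.End ℂ (MvPolynomial (Fin 2) ℂ)) :=
  !![a • 1 + Zm i * Dm i, -Dm i;
     Zm i * Zm i * Dm i + (a - b) • Zm i, b • 1 - Zm i * Dm i]

/-- The scalar 2×2 matrix `R·Id`. -/
noncomputable def SM (R : Module.End ℂ (MvPolynomial (Fin 2) ℂ)) :
    Matrix (Fin 2) (Fin 2) (Module.End ℂ (MvPolynomial (Fin 2) ℂ)) :=
  Matrix.scalar (Fin 2) R

noncomputable abbrev P2 := MvPolynomial (Fin 2) ℂ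

noncomputable def pb (j k : ℕ) : P2 := X 0 ^ j * (X 1 - X 0) ^ k

lemma pb_ne_zero (j k : ℕ) : pb j k ≠ 0 := by
  apply mul_ne_zero
  · exact pow_ne_zero _ (X_ne_zero 0)
  · apply pow_ne_zero
    apply sub_ne_zero.mpr
    intro h
    exact absurd (X_injective h) (by decide)

lemma smul_cancel_pb {a b : ℂ} {j k : ℕ} (h : a • pb j k = b • pb j k) : a = b := by
  have := sub_eq_zero.mpr h
  rw [← sub_smul] at this
  rcases smul_eq_zero.mp this with h' | h'
  · exact sub_eq_zero.mp h'
  · exact absurd h' (pb_ne_zero j k)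

lemma pd0_pb (j k : ℕ) :
    pderiv 0 (pb j k) = (j : P2) * (X 0 ^ (j-1) * (X 1 - X 0) ^ k)
      - (k : P2) * (X 0 ^ j * (X 1 - X 0) ^ (k-1)) := by
  simp [pb, pderiv_mul, pderiv_pow, pderiv_X_self, pderiv_X_of_ne (by decide : (1:Fin 2) ≠ 0),
    map_sub]
  ring

lemma pd1_pb (j k : ℕ) :
    pderiv 1 (pb j k) = (k : P2) * (X 0 ^ j * (X 1 - X 0) ^ (k-1)) := by
  simp [pb, pderiv_mul, pderiv_pow, pderiv_X_self, pderiv_X_of_ne (by decide : (0:Fin 2) ≠ 1),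
    map_sub]
  ring

lemma N_pb (j k : ℕ) : X 0 * (pderiv 0 (pb j k) + pderiv 1 (pb j k)) = (j : ℂ) • pb j k := by
  rw [pd0_pb, pd1_pb, smul_eq_C_mul, ← map_natCast (C : ℂ →+* P2)]
  cases j with
  | zero => simp
  | succ n =>
    push_cast
    simp only [Nat.succ_sub_one, pb, map_add, map_mul, map_one, map_zero, map_ofNat]
    ring

lemma M_pb (j k : ℕ) : (X 1 - X 0) * pderiv 1 (pb j k) = (k : ℂ) • pb j k := by
  rw [pd1_pb, smul_eq_C_mul, ← map_natCast (C : ℂ →+* P2)]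
  cases k with
  | zero => simp
  | succ n =>
    push_cast
    simp only [Nat.succ_sub_one, pb, map_add, map_mul, map_one, map_zero, map_ofNat]
    ring

lemma B_pb (j k : ℕ) : X 0 * (X 0 * pderiv 0 (pb j k)) + X 1 * (X 1 * pderiv 1 (pb j k))
    = ((j : ℂ) + 2 * k) • pb (j+1) k + (k : ℂ) • pb j (k+1) := by
  rw [pd0_pb, pd1_pb, smul_eq_C_mul, smul_eq_C_mul, ← map_natCast (C : ℂ →+* P2) j,
    ← map_natCast (C : ℂ →+* P2) k]
  cases j with
  | zero =>
    cases k with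
    | zero => simp
    | succ n =>
      push_cast
      simp only [Nat.succ_sub_one, pb, map_add, map_mul, map_one, map_zero, map_ofNat]
      ring
  | succ m =>
    cases k with
    | zero =>
      push_cast
      simp only [Nat.succ_sub_one, pb, map_add, map_mul, map_one, map_zero, map_ofNat]
      ring
    | succ n =>
      push_cast
      simp only [Nat.succ_sub_one, pb, map_add, map_mul, map_one, map_zero, map_ofNat]
      ring

lemma Zm0_pb (j k : ℕ) : X 0 * pb j k = pb (j+1) k := by
  simp only [pb]; ring

lemma Zm1_pb (j k : ℕ) : X 1 * pb j k = pb j (k+1) + pb (j+1) k := by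
  simp only [pb]; ring

lemma Xpd_monomial (i : Fin 2) (s : Fin 2 →₀ ℕ) (a : ℂ) :
    X i * pderiv i (monomial s a) = (s i : ℂ) • monomial s a := by
  rw [pderiv_monomial]
  by_cases h : s i = 0
  · simp [h]
  · have hs : Finsupp.single i 1 + (s - Finsupp.single i 1) = s := by
      ext x
      simp only [Finsupp.add_apply, Finsupp.tsub_apply, Finsupp.single_apply]
      split_ifs with hx
      · subst hx; omega
      · omega
    rw [X, monomial_mul, one_mul, hs, smul_monomial]
    congr 1
    rw [smul_eq_mul, mul_comm]

lemma coeff_Xpd (i : Fin 2) (m : Fin 2 →₀ ℕ) (f : P2) :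
    coeff m (X i * pderiv i f) = (m i : ℂ) * coeff m f := by
  induction f using MvPolynomial.induction_on' with
  | monomial s a =>
    rw [Xpd_monomial, coeff_smul, coeff_monomial, smul_eq_mul]
    split_ifs with h
    · subst h; ring
    · ring
  | add p q hp hq => simp [mul_add, hp, hq]

noncomputable def ψh : P2 →ₐ[ℂ] P2 := aeval ![X 0, X 1 + X 0]
noncomputable def φh : P2 →ₐ[ℂ] P2 := aeval ![X 0, X 1 - X 0]

@[simp] lemma psi_X0 : ψh (X 0) = X 0 := by simp [ψh]
@[simp] lemma psi_X1 : ψh (X 1) = X 1 + X 0 := by simp [ψh]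

lemma psi_inj : Function.Injective ψh := by
  have h : φh.comp ψh = AlgHom.id ℂ P2 := by
    apply MvPolynomial.algHom_ext
    intro i
    fin_cases i <;> simp [ψh, φh]
  intro a b hab
  have := congrArg φh hab
  calc a = φh (ψh a) := (DFunLike.congr_fun h a).symm
    _ = φh (ψh b) := this
    _ = b := DFunLike.congr_fun h b

lemma psi_pd1 (f : P2) : pderiv 1 (ψh f) = ψh (pderiv 1 f) := by
  induction f using MvPolynomial.induction_on with
  | C a => simp
  | add p q hp hq => simp [hp, hq]
  | mul_X p i ih =>
    fin_cases i <;>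
      simp [pderiv_mul, map_mul, map_add, ih,
        pderiv_X_self, pderiv_X_of_ne (by decide : (0:Fin 2) ≠ 1),
        pderiv_X_of_ne (by decide : (1:Fin 2) ≠ 0)] <;> try ring

lemma psi_pd0 (f : P2) : pderiv 0 (ψh f) = ψh (pderiv 0 f + pderiv 1 f) := by
  induction f using MvPolynomial.induction_on with
  | C a => simp
  | add p q hp hq =>
    simp only [map_add, hp, hq]
    ring
  | mul_X p i ih =>
    fin_cases i <;>
      simp [pderiv_mul, map_mul, map_add, ih,
        pderiv_X_self, pderiv_X_of_ne (by decide : (0:Fin 2) ≠ 1),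
        pderiv_X_of_ne (by decide : (1:Fin 2) ≠ 0)] <;> try ring

lemma psi_pb (j k : ℕ) : ψh (pb j k) = X 0 ^ j * X 1 ^ k := by
  simp [pb, map_mul, map_pow, map_sub]

lemma eig (j k : ℕ) (q : P2) (hN : X 0 * (pderiv 0 q + pderiv 1 q) = (j:ℂ) • q)
    (hM : (X 1 - X 0) * pderiv 1 q = (k:ℂ) • q) : ∃ c : ℂ, q = c • pb j k := by
  set r := ψh q with hr
  have hr0 : X 0 * pderiv 0 r = (j:ℂ) • r := by
    have h := congrArg ψh hN
    rw [map_mul, map_smul, psi_X0] at h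
    rw [hr, psi_pd0]
    exact h
  have hr1 : X 1 * pderiv 1 r = (k:ℂ) • r := by
    have h := congrArg ψh hM
    rw [map_mul, map_smul, map_sub, psi_X0, psi_X1, ← psi_pd1] at h
    rw [hr]
    simpa using h
  have key : ∀ m : Fin 2 →₀ ℕ, ¬ (m 0 = j ∧ m 1 = k) → coeff m r = 0 := by
    intro m hm
    by_contra hc
    apply hm
    constructor
    · have h := congrArg (coeff m) hr0
      rw [coeff_Xpd, coeff_smul, smul_eq_mul] at h
      have := mul_right_cancel₀ hc h
      exact_mod_cast this
    · have h := congrArg (coeff m) hr1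
      rw [coeff_Xpd, coeff_smul, smul_eq_mul] at h
      have := mul_right_cancel₀ hc h
      exact_mod_cast this
  classical
  set d0 : Fin 2 →₀ ℕ := Finsupp.single 0 j + Finsupp.single 1 k with hd0
  refine ⟨coeff d0 r, ?_⟩
  apply psi_inj
  rw [map_smul, psi_pb, ← hr]
  have hmon : (X 0 : P2) ^ j * X 1 ^ k = monomial d0 1 := by
    rw [X_pow_eq_monomial, X_pow_eq_monomial, monomial_mul, one_mul]
  rw [hmon]
  apply MvPolynomial.ext
  intro m
  rw [coeff_smul, coeff_monomial, smul_eq_mul]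
  by_cases h : d0 = m
  · subst h; simp
  · rw [if_neg h, mul_zero]
    apply key
    intro ⟨e0, e1⟩
    apply h
    ext x
    fin_cases x <;> simp [hd0, Finsupp.single_apply, e0, e1]

lemma coeff_pb_psi (j k : ℕ) (m : Fin 2 →₀ ℕ) :
    coeff m (ψh (pb j k)) = if Finsupp.single 0 j + Finsupp.single 1 k = m then 1 else 0 := by
  rw [psi_pb, X_pow_eq_monomial, X_pow_eq_monomial, monomial_mul, one_mul, coeff_monomial]

/-- If `R` commutes with multiplication by `z₁` and satisfies
`R (L₁(u₁,u₂) + L₂(v₁,v₂)) = (L₁(v₁,u₂) + L₂(u₁,v₂)) R`, then `R` is a constant multiple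
of `D₂[u₁−v₂, v₁−v₂]`, i.e. `∃ c, R = c·D₂[u₁−v₂,v₁−v₂]`, equality being recorded on the
basis `z₁ʲ(z₂−z₁)ᵏ` of `ℂ[z₁,z₂]`: the defining system fixes `ℛ₁` up to normalization. -/
theorem R1_uniqueness (u₁ u₂ v₁ v₂ : ℂ)
    (h₁ : ∀ n : ℕ, u₁ - v₂ ≠ -(n : ℂ)) (h₂ : ∀ n : ℕ, v₁ - v₂ ≠ -(n : ℂ))
    (R : Module.End ℂ (MvPolynomial (Fin 2) ℂ))
    (hz : R * Zm 0 = Zm 0 * R)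
    (hL : SM R * (Lax 0 u₁ u₂ + Lax 1 v₁ v₂) = (Lax 0 v₁ u₂ + Lax 1 u₁ v₂) * SM R) :
    ∃ c : ℂ, ∀ j k : ℕ,
      R ((X 0) ^ j * (X 1 - X 0) ^ k)
        = (c * (Complex.Gamma ((k : ℂ) + (u₁ - v₂)) / Complex.Gamma ((k : ℂ) + (v₁ - v₂))))
            • ((X 0) ^ j * (X 1 - X 0) ^ k) := by
  classical
  have h01 := congrFun (congrFun hL 0) 1
  have h00 := congrFun (congrFun hL 0) 0
  have h10 := congrFun (congrFun hL 1) 0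
  simp only [SM, Lax, Matrix.add_apply, Matrix.mul_apply, Fin.sum_univ_two,
    Matrix.scalar_apply, Matrix.diagonal_apply, Matrix.cons_val_zero, Matrix.cons_val_one,
    Matrix.head_cons, Matrix.of_apply, Matrix.cons_val', Matrix.empty_val',
    Matrix.cons_val_fin_one, Matrix.head_fin_const, if_true, if_false,
    zero_mul, mul_zero, add_zero, zero_add, eq_self_iff_true,
    show ((0:Fin 2) = 1) ↔ False by decide, show ((1:Fin 2) = 0) ↔ False by decide] at h01 h00 h10
  have hzf : ∀ f : P2, R (X 0 * f) = X 0 * R f := by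
    intro f
    have h := congrArg (fun T : Module.End ℂ P2 => T f) hz
    simpa [Zm, Module.End.mul_apply, LinearMap.mulLeft_apply] using h
  have hDf : ∀ f : P2, R (pderiv 0 f + pderiv 1 f) = pderiv 0 (R f) + pderiv 1 (R f) := by
    intro f
    have h := congrArg (fun T : Module.End ℂ P2 => T f) h01
    simp only [Module.End.mul_apply, LinearMap.add_apply, LinearMap.neg_apply, Dm,
      Derivation.coeFn_coe] at h
    rw [show -pderiv 0 f + -pderiv 1 f = -(pderiv 0 f + pderiv 1 f) by ring, map_neg] at h
    linear_combination -h
  have hEf : ∀ f : P2, R (X 0 * pderiv 0 f + X 1 * pderiv 1 f)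
      = X 0 * pderiv 0 (R f) + X 1 * pderiv 1 (R f) := by
    intro f
    have h := congrArg (fun T : Module.End ℂ P2 => T f) h00
    simp only [Module.End.mul_apply, LinearMap.add_apply, LinearMap.smul_apply,
      Module.End.one_apply, Dm, Zm, Derivation.coeFn_coe, LinearMap.mulLeft_apply] at h
    rw [show u₁ • f + X 0 * pderiv 0 f + (v₁ • f + X 1 * pderiv 1 f)
        = (X 0 * pderiv 0 f + X 1 * pderiv 1 f) + (u₁ + v₁) • f by
      simp only [smul_eq_C_mul, map_add]; ring, map_add, map_smul] at h
    simp only [smul_eq_C_mul, map_add] at h ⊢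
    linear_combination h
  have hBf : ∀ f : P2, R (X 0 * (X 0 * pderiv 0 f) + X 1 * (X 1 * pderiv 1 f))
        + (u₁ - u₂) • R (X 0 * f) + (v₁ - v₂) • R (X 1 * f)
      = (X 0 * (X 0 * pderiv 0 (R f)) + X 1 * (X 1 * pderiv 1 (R f)))
        + (v₁ - u₂) • (X 0 * R f) + (u₁ - v₂) • (X 1 * R f) := by
    intro f
    have h := congrArg (fun T : Module.End ℂ P2 => T f) h10
    simp only [Module.End.mul_apply, LinearMap.add_apply, LinearMap.smul_apply,
      Module.End.one_apply, Dm, Zm, Derivation.coeFn_coe, LinearMap.mulLeft_apply] at h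
    simp only [map_add, map_smul] at h
    rw [map_add]
    simp only [smul_eq_C_mul, map_sub] at h ⊢
    linear_combination h
  -- diagonality of R on the basis
  have hdiag : ∀ j k : ℕ, ∃ cc : ℂ, R (pb j k) = cc • pb j k := by
    intro j k
    apply eig
    · rw [← hDf, ← hzf, N_pb, map_smul]
    · rw [show (X 1 - X 0) * pderiv 1 (R (pb j k))
          = (X 0 * pderiv 0 (R (pb j k)) + X 1 * pderiv 1 (R (pb j k)))
            - X 0 * (pderiv 0 (R (pb j k)) + pderiv 1 (R (pb j k))) by ring,
        ← hEf, ← hDf, ← hzf, ← map_sub,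
        show X 0 * pderiv 0 (pb j k) + X 1 * pderiv 1 (pb j k)
            - X 0 * (pderiv 0 (pb j k) + pderiv 1 (pb j k))
          = (X 1 - X 0) * pderiv 1 (pb j k) by ring, M_pb, map_smul]
  choose c hc using hdiag
  have hcj : ∀ j k : ℕ, c j k = c 0 k := by
    intro j k
    induction j with
    | zero => rfl
    | succ n ih =>
      have h := hzf (pb n k)
      rw [Zm0_pb n k, hc (n+1) k, hc n k, mul_smul_comm, Zm0_pb n k] at h
      exact (smul_cancel_pb h).trans ih
  have psbA : ∀ k : ℕ, coeff (Finsupp.single 1 (k+1)) (ψh (pb 1 k)) = 0 := by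
    intro k
    rw [coeff_pb_psi, if_neg]
    intro h
    have := DFunLike.congr_fun h (0 : Fin 2)
    simp [Finsupp.single_apply] at this
  have psbB : ∀ k : ℕ, coeff (Finsupp.single 1 (k+1)) (ψh (pb 0 (k+1))) = 1 := by
    intro k
    rw [coeff_pb_psi, if_pos]
    simp
  have hrec : ∀ k : ℕ, ((k:ℂ) + (v₁ - v₂)) * c 0 (k+1) = ((k:ℂ) + (u₁ - v₂)) * c 0 k := by
    intro k
    have h := hBf (pb 0 k)
    rw [hc 0 k] at h
    simp only [Derivation.map_smul, mul_smul_comm] at h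
    rw [← smul_add] at h
    rw [B_pb 0 k, Zm0_pb 0 k, Zm1_pb 0 k] at h
    simp only [map_add, map_smul, hc] at h
    have hco := congrArg (fun g => coeff (Finsupp.single 1 (k+1)) (ψh g)) h
    simp only [map_add, map_smul, coeff_add, coeff_smul, psbA, psbB, smul_eq_mul,
      mul_zero, mul_one, add_zero, zero_add, Nat.cast_zero] at hco
    push_cast at hco ⊢
    linear_combination hco
  -- Gamma function assembly
  have hGA : ∀ k : ℕ, Complex.Gamma ((k:ℂ) + (u₁ - v₂)) ≠ 0 := fun k =>
    Complex.Gamma_ne_zero fun m => fun he => h₁ (k+m) (by push_cast; linear_combination he)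
  have hGB : ∀ k : ℕ, Complex.Gamma ((k:ℂ) + (v₁ - v₂)) ≠ 0 := fun k =>
    Complex.Gamma_ne_zero fun m => fun he => h₂ (k+m) (by push_cast; linear_combination he)
  have hkA : ∀ k : ℕ, (k:ℂ) + (u₁ - v₂) ≠ 0 := fun k => fun he =>
    h₁ k (by linear_combination he)
  have hkB : ∀ k : ℕ, (k:ℂ) + (v₁ - v₂) ≠ 0 := fun k => fun he =>
    h₂ k (by linear_combination he)
  set c0 : ℂ := c 0 0 * Complex.Gamma ((0:ℂ) + (v₁ - v₂)) / Complex.Gamma ((0:ℂ) + (u₁ - v₂)) with hc0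
  have hck : ∀ k : ℕ, c 0 k
      = c0 * (Complex.Gamma ((k:ℂ) + (u₁ - v₂)) / Complex.Gamma ((k:ℂ) + (v₁ - v₂))) := by
    intro k
    induction k with
    | zero =>
      have g1 := hGA 0
      have g2 := hGB 0
      rw [hc0]
      push_cast at g1 g2 ⊢
      simp only [zero_add] at g1 g2 ⊢
      field_simp
    | succ n ih =>
      have e1 : Complex.Gamma ((↑(n+1):ℂ) + (u₁ - v₂))
          = ((n:ℂ) + (u₁ - v₂)) * Complex.Gamma ((n:ℂ) + (u₁ - v₂)) := by
        push_cast
        rw [show ((n:ℂ) + 1) + (u₁ - v₂) = ((n:ℂ) + (u₁ - v₂)) + 1 by ring,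
          Complex.Gamma_add_one _ (hkA n)]
      have e2 : Complex.Gamma ((↑(n+1):ℂ) + (v₁ - v₂))
          = ((n:ℂ) + (v₁ - v₂)) * Complex.Gamma ((n:ℂ) + (v₁ - v₂)) := by
        push_cast
        rw [show ((n:ℂ) + 1) + (v₁ - v₂) = ((n:ℂ) + (v₁ - v₂)) + 1 by ring,
          Complex.Gamma_add_one _ (hkB n)]
      have hcn : c 0 (n+1) = (((n:ℂ) + (u₁ - v₂)) * c 0 n) / ((n:ℂ) + (v₁ - v₂)) := by
        rw [eq_div_iff (hkB n)]
        linear_combination hrec n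
      rw [hcn, ih, e1, e2]
      have g1 := hGA n
      have g2 := hGB n
      have g3 := hkB n
      field_simp
  refine ⟨c0, ?_⟩
  intro j k
  have h := hc j k
  rw [hcj j k, hck k] at h
  exact h
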